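/- The map sending (p_1, p_2, ..., p_{n-1}, p_n) to (p_{n-1}, p_{n-2}, ..., p_1, p_n) is a bijection between PF-hat_n^1 and PF-hat_n^2. -/

import Mathlib

/-- `p` is a parking function of length `n`: some nondecreasing rearrangement
`q_1 ≤ ⋯ ≤ q_n` of `p` satisfies `q_j < j` (0-based: `q_i ≤ i`). -/
def IsParkingFn {n : ℕ} (p : Fin n → ℕ) : Prop :=
  ∃ τ : Equiv.Perm (Fin n), (Monotone fun i => p (τ i)) ∧ ∀ i : Fin n, p (τ i) ≤ (i : ℕ)

lemma parking_comp {n : ℕ} (p : Fin n → ℕ) (σ : Equiv.Perm (Fin n))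
    (h : IsParkingFn p) : IsParkingFn (fun i => p (σ i)) := by
  obtain ⟨τ, h1, h2⟩ := h
  refine ⟨τ.trans σ.symm, ?_, ?_⟩
  · simpa [Equiv.trans_apply] using h1
  · simpa [Equiv.trans_apply] using h2

lemma parking_le {n : ℕ} {p : Fin n → ℕ} (h : IsParkingFn p) (k : Fin n) : p k ≤ n - 1 := by
  obtain ⟨τ, _, h2⟩ := h
  have h3 := h2 (τ.symm k)
  rw [Equiv.apply_symm_apply] at h3
  have := (τ.symm k).isLt
  omega

def revP (n : ℕ) (hn : 1 ≤ n) : Fin n → Fin n := fun i =>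
  if (i : ℕ) = n - 1 then i else ⟨n - 2 - (i : ℕ), by have := i.isLt; omega⟩

lemma revP_inv (n : ℕ) (hn : 1 ≤ n) : Function.Involutive (revP n hn) := by
  intro i
  have hi := i.isLt
  unfold revP
  split_ifs with h1 h2 h3 <;> first | rfl | (apply Fin.ext; simp at * <;> omega)

/-- The map `(p_1, …, p_{n-1}, p_n) ↦ (p_{n-1}, …, p_1, p_n)` (reversing the first `n-1`
coordinates) is a bijection from `PF-hat_n^1` onto `PF-hat_n^2`, where
`PF-hat_n^1 = {p parking : p_t ≤ t ∀t, and p_i = i ⟹ p_n < i}` and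
`PF-hat_n^2 = {p parking : p_{n-t} ≤ t ∀ 1 ≤ t ≤ n-1, and p_{n-i} = i ⟹ p_n < i}`
(1-based indexing; the 0-based index `i` corresponds to the 1-based `i+1`). -/
theorem bijOn_PFhat1_PFhat2 (n : ℕ) (hn : 1 ≤ n) :
    Set.BijOn
      (fun (p : Fin n → ℕ) => fun i : Fin n =>
        if (i : ℕ) = n - 1 then p i else p ⟨n - 2 - (i : ℕ), by omega⟩)
      {p : Fin n → ℕ | IsParkingFn p ∧ (∀ i : Fin n, p i ≤ (i : ℕ) + 1) ∧
        ∀ i : Fin n, p i = (i : ℕ) + 1 → p ⟨n - 1, by omega⟩ < (i : ℕ) + 1}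
      {p : Fin n → ℕ | IsParkingFn p ∧
        (∀ t : ℕ, 1 ≤ t → t ≤ n - 1 → p ⟨n - 1 - t, by omega⟩ ≤ t) ∧
        ∀ i : ℕ, 1 ≤ i → i ≤ n - 1 → p ⟨n - 1 - i, by omega⟩ = i →
          p ⟨n - 1, by omega⟩ < i} := by
  set f := (fun (p : Fin n → ℕ) => fun i : Fin n =>
        if (i : ℕ) = n - 1 then p i else p ⟨n - 2 - (i : ℕ), by omega⟩) with hf
  have hfeq : ∀ p : Fin n → ℕ, f p = fun i => p (revP n hn i) := by
    intro p; funext i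
    simp only [hf, revP]
    split_ifs <;> rfl
  have hinv : ∀ p, f (f p) = p := by
    intro p
    simp only [hfeq]
    funext i
    rw [revP_inv n hn i]
  have hperm : ∀ i, ((revP_inv n hn).toPerm : Fin n → Fin n) i = revP n hn i := fun i => rfl
  have hpark : ∀ p : Fin n → ℕ, IsParkingFn p → IsParkingFn (f p) := by
    intro p hp
    rw [hfeq]
    have := parking_comp p (revP_inv n hn).toPerm hp
    simpa [hperm] using this
  have hmt1 : Set.MapsTo f
      {p : Fin n → ℕ | IsParkingFn p ∧ (∀ i : Fin n, p i ≤ (i : ℕ) + 1) ∧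
        ∀ i : Fin n, p i = (i : ℕ) + 1 → p ⟨n - 1, by omega⟩ < (i : ℕ) + 1}
      {p : Fin n → ℕ | IsParkingFn p ∧
        (∀ t : ℕ, 1 ≤ t → t ≤ n - 1 → p ⟨n - 1 - t, by omega⟩ ≤ t) ∧
        ∀ i : ℕ, 1 ≤ i → i ≤ n - 1 → p ⟨n - 1 - i, by omega⟩ = i →
          p ⟨n - 1, by omega⟩ < i} := by
    rintro p ⟨hp, h2, h3⟩
    refine ⟨hpark p hp, ?_, ?_⟩
    · intro t ht1 ht2
      have hne : ¬ ((n - 1 - t : ℕ) = n - 1) := by omega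
      show (if ((⟨n - 1 - t, by omega⟩ : Fin n) : ℕ) = n - 1 then _ else _) ≤ t
      rw [if_neg hne]
      have hfin : (⟨n - 2 - ((⟨n - 1 - t, by omega⟩ : Fin n) : ℕ), by omega⟩ : Fin n)
          = ⟨t - 1, by omega⟩ := Fin.ext (by simp; omega)
      rw [hfin]
      have := h2 ⟨t - 1, by omega⟩
      simp only at this
      omega
    · intro i hi1 hi2 heq
      have hne : ¬ ((n - 1 - i : ℕ) = n - 1) := by omega
      rw [show f p ⟨n - 1 - i, by omega⟩ = p ⟨n - 2 - (n - 1 - i), by omega⟩ from if_neg hne] at heq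
      have hlast : f p ⟨n - 1, by omega⟩ = p ⟨n - 1, by omega⟩ := if_pos rfl
      rw [hlast]
      have hidx : (n - 2 - (n - 1 - i) : ℕ) = i - 1 := by omega
      have := h3 ⟨n - 2 - (n - 1 - i), by omega⟩ (by simp only; omega)
      simp only [hidx] at this
      have := this
      omega
  have hmt2 : Set.MapsTo f
      {p : Fin n → ℕ | IsParkingFn p ∧
        (∀ t : ℕ, 1 ≤ t → t ≤ n - 1 → p ⟨n - 1 - t, by omega⟩ ≤ t) ∧
        ∀ i : ℕ, 1 ≤ i → i ≤ n - 1 → p ⟨n - 1 - i, by omega⟩ = i →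
          p ⟨n - 1, by omega⟩ < i}
      {p : Fin n → ℕ | IsParkingFn p ∧ (∀ i : Fin n, p i ≤ (i : ℕ) + 1) ∧
        ∀ i : Fin n, p i = (i : ℕ) + 1 → p ⟨n - 1, by omega⟩ < (i : ℕ) + 1} := by
    rintro p ⟨hp, h2, h3⟩
    have hlast : f p ⟨n - 1, by omega⟩ = p ⟨n - 1, by omega⟩ := if_pos rfl
    have hbd := parking_le hp
    refine ⟨hpark p hp, ?_, ?_⟩
    · intro i
      by_cases hc : (i : ℕ) = n - 1
      · have hfi : f p i = p i := if_pos hc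
        rw [hfi]
        have := hbd i
        omega
      · have hfi : f p i = p ⟨n - 2 - (i : ℕ), by omega⟩ := if_neg hc
        rw [hfi]
        have hi := i.isLt
        have := h2 ((i : ℕ) + 1) (by omega) (by omega)
        have hfin : (⟨n - 1 - ((i : ℕ) + 1), by omega⟩ : Fin n) = ⟨n - 2 - (i : ℕ), by omega⟩ :=
          Fin.ext (by simp; omega)
        rw [hfin] at this
        exact this
    · intro i heq
      rw [hlast]
      by_cases hc : (i : ℕ) = n - 1
      · have hfi : f p i = p i := if_pos hc
        rw [hfi] at heq
        have := hbd i
        omega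
      · have hfi : f p i = p ⟨n - 2 - (i : ℕ), by omega⟩ := if_neg hc
        rw [hfi] at heq
        have hi := i.isLt
        have := h3 ((i : ℕ) + 1) (by omega) (by omega) ?_
        · exact this
        · have hfin : (⟨n - 1 - ((i : ℕ) + 1), by omega⟩ : Fin n) = ⟨n - 2 - (i : ℕ), by omega⟩ :=
            Fin.ext (by simp; omega)
          rw [hfin]
          exact heq
  exact Set.InvOn.bijOn ⟨fun p _ => hinv p, fun p _ => hinv p⟩ hmt1 hmt2
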